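/- arXiv:2405.14123 — 4 statements merged into one kernel-verified Lean document; each statement's English description precedes it below -/
import Mathlib

section
/- Let c ∈ ℂ^{ℤ_d×ℤ_d} satisfy (i) c_{jk} = ω^{-jk}·conj(c_{-j,-k}) for all j,k ∈ ℤ_d, (ii) c_{00} = 1, and (iii) |c_{jk}|² = 1/(d+1) for all (j,k) ≠ (0,0). Then the matrix Tc is Hermitian, trace(Tc) = 1, and trace((Tc)²) = 1 (equivalently, its eigenvalues λ_1,…,λ_d satisfy Σ_j λ_j = 1, Σ_j λ_j² = 1, and Σ_{j≠k} λ_j λ_k = 0). -/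
open Matrix Complex

/-- `ω = exp(2πi/d)`, a primitive `d`-th root of unity. -/
noncomputable def omegaRoot (d : ℕ) : ℂ := Complex.exp (2 * Real.pi * Complex.I / d)

/-- The cyclic shift matrix `S`, `S_{jk} = δ_{j,k+1}`. -/
def Smat (d : ℕ) [NeZero d] : Matrix (ZMod d) (ZMod d) ℂ :=
  Matrix.of fun j k => if j = k + 1 then 1 else 0

/-- The modulation matrix `Ω`, `Ω_{jk} = ω^j δ_{jk}`. -/
noncomputable def Omat (d : ℕ) [NeZero d] : Matrix (ZMod d) (ZMod d) ℂ :=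
  Matrix.of fun j k => if j = k then omegaRoot d ^ j.val else 0

/-- The reconstruction operator `T`, `Tc = (1/d) Σ_{j,k} c_{jk} (S^j Ω^k)^*`. -/
noncomputable def Trec (d : ℕ) [NeZero d] (c : Matrix (ZMod d) (ZMod d) ℂ) :
    Matrix (ZMod d) (ZMod d) ℂ :=
  (1 / (d : ℂ)) • ∑ j : ZMod d, ∑ k : ZMod d, c j k • (Smat d ^ j.val * Omat d ^ k.val)ᴴ

section basics
variable (d : ℕ) [NeZero d]

lemma omegaRoot_prim : IsPrimitiveRoot (omegaRoot d) d :=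
  Complex.isPrimitiveRoot_exp d (NeZero.ne d)

lemma omegaRoot_pow_d : omegaRoot d ^ d = 1 := (omegaRoot_prim d).pow_eq_one

lemma omegaRoot_pow_mod (n : ℕ) : omegaRoot d ^ (n % d) = omegaRoot d ^ n :=
  (pow_eq_pow_mod n (omegaRoot_pow_d d)).symm

noncomputable def ee (t : ZMod d) : ℂ := omegaRoot d ^ t.val

lemma ee_natCast (n : ℕ) : ee d (n : ZMod d) = omegaRoot d ^ n := by
  rw [ee, ZMod.val_natCast, omegaRoot_pow_mod]

lemma ee_zero : ee d 0 = 1 := by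
  simpa using ee_natCast d 0

lemma ee_add (s t : ZMod d) : ee d (s + t) = ee d s * ee d t := by
  have h : ((s.val + t.val : ℕ) : ZMod d) = s + t := by
    push_cast
    simp [ZMod.natCast_val, ZMod.cast_id]
  rw [← h, ee_natCast, pow_add, ee, ee]

lemma ee_mul (s t : ZMod d) : ee d (s * t) = (ee d s) ^ t.val := by
  have h : ((s.val * t.val : ℕ) : ZMod d) = s * t := by
    push_cast
    simp [ZMod.natCast_val, ZMod.cast_id]
  rw [← h, ee_natCast, pow_mul, ee]

lemma ee_mul_neg (t : ZMod d) : ee d t * ee d (-t) = 1 := by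
  rw [← ee_add, add_neg_cancel, ee_zero]

omit [NeZero d] in
lemma omegaRoot_ne_zero : omegaRoot d ≠ 0 := Complex.exp_ne_zero _

lemma ee_ne_zero (t : ZMod d) : ee d t ≠ 0 :=
  pow_ne_zero _ (omegaRoot_ne_zero d)

lemma ee_neg (t : ZMod d) : ee d (-t) = (ee d t)⁻¹ :=
  eq_inv_of_mul_eq_one_left (by rw [mul_comm] at *; exact ee_mul_neg d t)

lemma omegaRoot_conj : (starRingEnd ℂ) (omegaRoot d) = (omegaRoot d)⁻¹ := by
  rw [omegaRoot, ← Complex.exp_conj, ← Complex.exp_neg]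
  congr 1
  simp only [map_div₀, _root_.map_mul, map_ofNat, Complex.conj_I, Complex.conj_natCast,
    Complex.conj_ofReal, neg_div]
  ring

lemma ee_star (t : ZMod d) : star (ee d t) = ee d (-t) := by
  rw [ee_neg]
  show (starRingEnd ℂ) (omegaRoot d ^ t.val) = (omegaRoot d ^ t.val)⁻¹
  rw [map_pow, omegaRoot_conj, inv_pow]

lemma sum_val (f : ℕ → ℂ) : ∑ a : ZMod d, f a.val = ∑ i ∈ Finset.range d, f i := by
  apply Finset.sum_bij' (fun (a : ZMod d) _ => a.val) (fun i _ => (i : ZMod d))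
  · intro a _; exact Finset.mem_range.2 (ZMod.val_lt a)
  · intro i _; exact Finset.mem_univ _
  · intro a _; exact ZMod.natCast_rightInverse a
  · intro i hi; exact ZMod.val_natCast_of_lt (Finset.mem_range.1 hi)
  · intro a _; rfl

lemma ee_sum (t : ZMod d) : ∑ a : ZMod d, ee d (t * a) = if t = 0 then (d : ℂ) else 0 := by
  split_ifs with h
  · subst h; simp [ee_zero, Finset.card_univ]
  · have hne : ee d t ≠ 1 := by
      intro h1
      apply h
      have := ((omegaRoot_prim d).pow_eq_one_iff_dvd t.val).1 h1
      have := Nat.eq_zero_of_dvd_of_lt this (ZMod.val_lt t)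
      · exact (ZMod.val_eq_zero t).1 (by omega)
    have : ∑ a : ZMod d, ee d (t * a) = ∑ i ∈ Finset.range d, (ee d t) ^ i := by
      rw [← sum_val d (fun i => ee d t ^ i)]
      exact Finset.sum_congr rfl fun a _ => ee_mul d t a
    rw [this, geom_sum_eq hne]
    have : ee d t ^ d = 1 := by
      rw [ee, ← pow_mul, mul_comm, pow_mul, omegaRoot_pow_d, one_pow]
    rw [this, sub_self, zero_div]

end basics


section mats
variable (d : ℕ) [NeZero d]

lemma Smat_pow (m : ℕ) (a b : ZMod d) :
    (Smat d ^ m) a b = if a = b + m then 1 else 0 := by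
  induction m generalizing a b with
  | zero => simp [Matrix.one_apply]
  | succ m ih =>
    rw [pow_succ, Matrix.mul_apply]
    rw [Finset.sum_eq_single (b + 1)]
    · rw [ih]
      simp only [Smat, Matrix.of_apply, if_pos rfl, mul_one]
      have : b + (m + 1 : ℕ) = b + 1 + m := by push_cast; ring
      rw [this]
      split_ifs <;> simp
    · intro x _ hx
      simp only [Smat, Matrix.of_apply, if_neg hx, mul_zero]
    · intro h; exact absurd (Finset.mem_univ _) h

lemma Omat_pow (m : ℕ) (a b : ZMod d) :
    (Omat d ^ m) a b = if a = b then (omegaRoot d ^ b.val) ^ m else 0 := by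
  induction m generalizing a b with
  | zero => simp [Matrix.one_apply]
  | succ m ih =>
    rw [pow_succ, Matrix.mul_apply]
    rw [Finset.sum_eq_single b]
    · rw [ih]
      simp only [Omat, Matrix.of_apply]
      by_cases h : a = b <;> simp [h, pow_succ]
    · intro x _ hx
      simp only [Omat, Matrix.of_apply, if_neg hx, mul_zero]
    · intro h; exact absurd (Finset.mem_univ _) h

lemma SO_apply (j k a b : ZMod d) :
    (Smat d ^ j.val * Omat d ^ k.val) a b = if a = b + j then ee d (k * b) else 0 := by
  rw [Matrix.mul_apply, Finset.sum_eq_single b]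
  · rw [Smat_pow, Omat_pow, if_pos rfl, ZMod.natCast_val, ZMod.cast_id, mul_comm k b, ee_mul]
    split_ifs <;> simp [ee]
  · intro x _ hx
    rw [Omat_pow, if_neg hx, mul_zero]
  · intro h; exact absurd (Finset.mem_univ _) h

lemma Trec_apply (c : Matrix (ZMod d) (ZMod d) ℂ) (a b : ZMod d) :
    Trec d c a b = (1 / (d : ℂ)) * ∑ k : ZMod d, c (b - a) k * ee d (-(k * a)) := by
  rw [Trec, Matrix.smul_apply, smul_eq_mul]
  congr 1
  rw [Matrix.sum_apply]
  rw [Finset.sum_eq_single (b - a)]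
  · rw [Matrix.sum_apply]
    refine Finset.sum_congr rfl fun k _ => ?_
    rw [Matrix.smul_apply, Matrix.conjTranspose_apply, SO_apply, if_pos (by ring),
      ee_star, smul_eq_mul]
  · intro j _ hj
    rw [Matrix.sum_apply]
    apply Finset.sum_eq_zero
    intro k _
    rw [Matrix.smul_apply, Matrix.conjTranspose_apply, SO_apply, if_neg, star_zero, smul_zero]
    intro h
    exact hj (by rw [h]; ring)
  · intro h; exact absurd (Finset.mem_univ _) h

end mats

section main
variable (d : ℕ) [NeZero d]

lemma h1' (j k : ZMod d) :
    omegaRoot d ^ (-((j.val : ℤ) * (k.val : ℤ))) = ee d (-(j * k)) := by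
  have h : -((j.val : ℤ) * (k.val : ℤ)) = -((j.val * k.val : ℕ) : ℤ) := by push_cast; ring
  rw [h, _root_.zpow_neg, zpow_natCast, ← ee_natCast, ee_neg]
  congr 2
  push_cast
  simp [ZMod.natCast_val, ZMod.cast_id]

lemma ee_conj (t : ZMod d) : (starRingEnd ℂ) (ee d t) = ee d (-t) := ee_star d t

lemma innerSumEE (j : ZMod d) (x y : ZMod d → ℂ) :
    ∑ a : ZMod d, (∑ k : ZMod d, x k * ee d (-(k*a))) * (∑ k' : ZMod d, y k' * ee d (-(k'*(a+j))))
      = (d : ℂ) * ∑ k : ZMod d, x k * y (-k) * ee d (k*j) := by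
  have expand : ∀ a : ZMod d, (∑ k : ZMod d, x k * ee d (-(k*a))) * (∑ k' : ZMod d, y k' * ee d (-(k'*(a+j))))
      = ∑ k : ZMod d, ∑ k' : ZMod d, x k * y k' * (ee d (-(k'*j)) * ee d ((-(k+k'))*a)) := by
    intro a
    rw [Finset.sum_mul_sum]
    refine Finset.sum_congr rfl fun k _ => Finset.sum_congr rfl fun k' _ => ?_
    have hee : ee d (-(k*a)) * ee d (-(k'*(a+j))) = ee d (-(k'*j)) * ee d ((-(k+k'))*a) := by
      rw [← ee_add, ← ee_add]; congr 1; ring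
    linear_combination (x k * y k') * hee
  simp only [expand]
  rw [Finset.sum_comm]
  rw [Finset.mul_sum]
  refine Finset.sum_congr rfl fun k _ => ?_
  rw [Finset.sum_comm]
  have hinner : ∀ k' : ZMod d, ∑ a : ZMod d, x k * y k' * (ee d (-(k'*j)) * ee d ((-(k+k'))*a))
      = x k * y k' * ee d (-(k'*j)) * (if -(k+k') = 0 then (d:ℂ) else 0) := by
    intro k'
    rw [← ee_sum d (-(k+k')), Finset.mul_sum]
    refine Finset.sum_congr rfl fun a _ => by ring
  simp only [hinner]
  rw [Finset.sum_eq_single (-k)]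
  · simp only [add_neg_cancel, neg_zero, neg_mul, neg_neg, if_true, reduceIte]
    ring
  · intro k' _ hk'
    rw [if_neg, mul_zero]
    intro h
    exact hk' (by linear_combination -h)
  · intro h; exact absurd (Finset.mem_univ _) h

end main

theorem stmt0 (d : ℕ) [NeZero d] (hd : 2 ≤ d) (c : Matrix (ZMod d) (ZMod d) ℂ)
    (h1 : ∀ j k : ZMod d,
      c j k = omegaRoot d ^ (-((j.val : ℤ) * (k.val : ℤ))) * (starRingEnd ℂ) (c (-j) (-k)))
    (h2 : c 0 0 = 1)
    (h3 : ∀ j k : ZMod d, (j, k) ≠ (0, 0) → ‖c j k‖ ^ 2 = 1 / (d + 1)) :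
    (Trec d c).IsHermitian ∧ (Trec d c).trace = 1 ∧ ((Trec d c) ^ 2).trace = 1 := by
  have hd0 : (d : ℂ) ≠ 0 := Nat.cast_ne_zero.2 (NeZero.ne d)
  have hconj : ∀ j k : ZMod d, (starRingEnd ℂ) (c j k) = ee d (j*k) * c (-j) (-k) := by
    intro j k
    rw [h1 j k, h1' d j k, _root_.map_mul, Complex.conj_conj, ee_conj, neg_neg]
  -- Hermitian
  have herm : (Trec d c).IsHermitian := by
    rw [Matrix.IsHermitian]
    ext a b
    rw [Matrix.conjTranspose_apply, Trec_apply, Trec_apply]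
    have : star (1 / (d:ℂ) * ∑ k : ZMod d, c (a - b) k * ee d (-(k * b)))
        = 1 / (d:ℂ) * ∑ k : ZMod d, (ee d ((a-b)*k) * c (b-a) (-k)) * ee d (k*b) := by
      rw [RCLike.star_def, _root_.map_mul, map_sum]
      congr 1
      · simp
      refine Finset.sum_congr rfl fun k _ => ?_
      rw [_root_.map_mul, hconj, ee_conj, neg_neg, neg_sub]
    rw [this]
    congr 1
    rw [← Equiv.sum_comp (Equiv.neg (ZMod d))
      (fun k => (ee d ((a-b)*k) * c (b-a) (-k)) * ee d (k*b))]
    refine Finset.sum_congr rfl fun k _ => ?_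
    simp only [Equiv.neg_apply, neg_neg]
    have hee : ee d ((a-b) * -k) * ee d (-k*b) = ee d (-(k*a)) := by
      rw [← ee_add]; congr 1; ring
    linear_combination (c (b-a) k) * hee
  refine ⟨herm, ?_, ?_⟩
  -- trace
  · rw [Matrix.trace]
    have hdiag : ∀ a : ZMod d, (Trec d c).diag a
        = 1 / (d:ℂ) * ∑ k : ZMod d, c 0 k * ee d ((-k)*a) := by
      intro a
      rw [Matrix.diag_apply, Trec_apply, sub_self]
      congr 1
      refine Finset.sum_congr rfl fun k _ => ?_
      rw [show -(k*a) = (-k)*a from by ring]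
    simp only [hdiag]
    rw [← Finset.mul_sum, Finset.sum_comm]
    have hk : ∀ k : ZMod d, ∑ a : ZMod d, c 0 k * ee d ((-k)*a)
        = c 0 k * (if -k = 0 then (d:ℂ) else 0) := by
      intro k
      rw [← ee_sum d (-k), Finset.mul_sum]
    simp only [hk]
    rw [Finset.sum_eq_single 0]
    · rw [h2, neg_zero, if_pos rfl, one_mul, one_div, inv_mul_cancel₀ hd0]
    · intro k _ hk0
      rw [if_neg (by simpa [neg_eq_zero] using hk0), mul_zero]
    · intro h; exact absurd (Finset.mem_univ _) h
  -- trace of square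
  · rw [pow_two, Matrix.trace]
    have hdiag : ∀ a : ZMod d, (Trec d c * Trec d c).diag a
        = (1/(d:ℂ))^2 * ∑ j : ZMod d, (∑ k : ZMod d, c j k * ee d (-(k*a)))
            * (∑ k' : ZMod d, c (-j) k' * ee d (-(k'*(a+j)))) := by
      intro a
      rw [Matrix.diag_apply, Matrix.mul_apply]
      rw [← Equiv.sum_comp (Equiv.addLeft a) (fun b => Trec d c a b * Trec d c b a)]
      rw [Finset.mul_sum]
      refine Finset.sum_congr rfl fun j _ => ?_
      rw [Trec_apply, Trec_apply]
      simp only [Equiv.coe_addLeft, add_sub_cancel_left, sub_add_cancel_left]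
      ring
    simp only [hdiag]
    rw [← Finset.mul_sum, Finset.sum_comm]
    have hj : ∀ j : ZMod d, ∑ a : ZMod d, (∑ k : ZMod d, c j k * ee d (-(k*a)))
            * (∑ k' : ZMod d, c (-j) k' * ee d (-(k'*(a+j))))
        = (d:ℂ) * ∑ k : ZMod d, c j k * c (-j) (-k) * ee d (k*j) :=
      fun j => innerSumEE d j (c j) (c (-j))
    simp only [hj]
    rw [← Finset.mul_sum]
    have hval : ∀ j k : ZMod d, c j k * c (-j) (-k) * ee d (k*j)
        = (((‖c j k‖)^2 : ℝ) : ℂ) := by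
      intro j k
      have hck : c (-j) (-k) = ee d (-(j*k)) * (starRingEnd ℂ) (c j k) := by
        rw [hconj, ← mul_assoc, mul_comm (ee d (-(j*k))), ee_mul_neg, one_mul]
      rw [hck]
      have hee : ee d (k*j) * ee d (-(j*k)) = 1 := by
        rw [← ee_add]
        rw [show k*j + -(j*k) = 0 from by ring, ee_zero]
      have habs : c j k * (starRingEnd ℂ) (c j k) = (((‖c j k‖)^2 : ℝ) : ℂ) := by
        rw [Complex.mul_conj, Complex.sq_norm]
      calc c j k * (ee d (-(j*k)) * (starRingEnd ℂ) (c j k)) * ee d (k*j)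
          = (c j k * (starRingEnd ℂ) (c j k)) * (ee d (k*j) * ee d (-(j*k))) := by ring
        _ = (((‖c j k‖)^2 : ℝ) : ℂ) := by rw [hee, habs, mul_one]
    simp only [hval]
    have hsum : ∑ j : ZMod d, ∑ k : ZMod d, (((‖c j k‖)^2 : ℝ) : ℂ) = (d : ℂ) := by
      rw [← Finset.sum_product' (f := fun j k => (((‖c j k‖)^2 : ℝ) : ℂ)),
        Finset.univ_product_univ]
      rw [← Finset.add_sum_erase _ _ (Finset.mem_univ ((0:ZMod d), (0:ZMod d)))]
      have h00 : (((‖c (0:ZMod d) (0:ZMod d)‖)^2 : ℝ) : ℂ) = 1 := by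
        rw [h2]; simp
      have hrest : ∀ p ∈ (Finset.univ.erase ((0:ZMod d),(0:ZMod d))),
          (((‖c p.1 p.2‖)^2 : ℝ) : ℂ) = (((1:ℝ)/((d:ℝ)+1) : ℝ) : ℂ) := by
        intro p hp
        have hp' := Finset.ne_of_mem_erase hp
        rw [h3 p.1 p.2 (by simpa using hp')]
      rw [Finset.sum_congr rfl hrest, Finset.sum_const, h00,
        Finset.card_erase_of_mem (Finset.mem_univ _), Finset.card_univ]
      have hcard : Fintype.card (ZMod d × ZMod d) = d * d := by
        simp [ZMod.card]
      rw [hcard, nsmul_eq_mul]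
      have h1le : (1:ℕ) ≤ d * d :=
        Nat.one_le_iff_ne_zero.2 (Nat.mul_ne_zero (NeZero.ne d) (NeZero.ne d))
      have hd1 : (d:ℂ) + 1 ≠ 0 := Nat.cast_add_one_ne_zero d
      push_cast [h1le]
      field_simp
      ring
    rw [hsum]
    field_simp
end

section
/- Let c ∈ ℂ^{ℤ_d×ℤ_d} and m ∈ ℤ_d. Then Tc = vv* for some v ∈ ℂ^d with v_m ≠ 0 if and only if p_0(ω^m) is real and positive and p_{j−k}(ω^k) = p_{j−m}(ω^m)·conj(p_{k−m}(ω^m)) / p_0(ω^m) for all j,k ∈ ℤ_d (all subscripts mod d). -/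
open Matrix Complex

/-- The `j`-th symbol of `c`: `p_j(z) = Σ_r c_{-j,r} (ω^j z)^{-r}`. -/
noncomputable def symb (d : ℕ) [NeZero d] (c : Matrix (ZMod d) (ZMod d) ℂ)
    (j : ZMod d) (z : ℂ) : ℂ :=
  ∑ r : ZMod d, c (-j) r * (omegaRoot d ^ j.val * z) ^ (-(r.val : ℤ))

namespace Aux
variable (d : ℕ) [NeZero d]

lemma omega_pow_d : omegaRoot d ^ d = 1 := by
  have hd : (d:ℂ) ≠ 0 := Nat.cast_ne_zero.mpr (NeZero.ne d)
  rw [omegaRoot, ← Complex.exp_nat_mul]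
  rw [show (d:ℂ) * (2 * ↑Real.pi * Complex.I / d) = 2 * ↑Real.pi * Complex.I by field_simp]
  exact Complex.exp_two_pi_mul_I

lemma omega_pow_mod (n : ℕ) : omegaRoot d ^ n = omegaRoot d ^ (n % d) :=
  pow_eq_pow_mod n (omega_pow_d d)

lemma conj_omega_pow (n : ℕ) : (starRingEnd ℂ) (omegaRoot d ^ n) = (omegaRoot d ^ n)⁻¹ := by
  rw [map_pow, ← inv_pow]
  congr 1
  rw [omegaRoot, ← Complex.exp_conj, ← Complex.exp_neg]
  congr 1
  simp only [map_div₀, _root_.map_mul, Complex.conj_I, Complex.conj_ofReal, map_ofNat, map_natCast]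
  ring

lemma omega_val_add (x y : ZMod d) :
    omegaRoot d ^ (x.val + y.val) = omegaRoot d ^ ((x + y).val) := by
  rw [omega_pow_mod, ZMod.val_add, ← omega_pow_mod]

lemma Smat_pow_apply (n : ℕ) (j k : ZMod d) :
    (Smat d ^ n) j k = if j = k + (n : ZMod d) then 1 else 0 := by
  induction n generalizing j k with
  | zero => simp [Matrix.one_apply]
  | succ n ih =>
    rw [pow_succ, Matrix.mul_apply]
    rw [Finset.sum_eq_single (k+1)]
    · rw [ih]
      simp only [Smat, Matrix.of_apply, if_pos rfl, mul_one]
      congr 1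
      push_cast
      ring
    · intro b _ hb
      simp [Smat, hb]
    · intro h
      exact absurd (Finset.mem_univ _) h

lemma Omat_eq : Omat d = Matrix.diagonal (fun j => omegaRoot d ^ j.val) := by
  ext j k
  by_cases h : j = k <;> simp [Omat, Matrix.diagonal_apply, h]

lemma Omat_pow_apply (n : ℕ) (j k : ZMod d) :
    (Omat d ^ n) j k = if j = k then (omegaRoot d ^ j.val) ^ n else 0 := by
  rw [Omat_eq, Matrix.diagonal_pow, Matrix.diagonal_apply]
  simp [Pi.pow_apply]

lemma Trec_apply (c : Matrix (ZMod d) (ZMod d) ℂ) (a b : ZMod d) :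
    Trec d c a b = (1 / (d:ℂ)) * symb d c (a - b) (omegaRoot d ^ b.val) := by
  have hform : ∀ j k : ZMod d,
      ((Smat d ^ j.val * Omat d ^ k.val)ᴴ) a b
        = if j = b - a then ((omegaRoot d ^ a.val) ^ k.val)⁻¹ else 0 := by
    intro j k
    rw [Matrix.conjTranspose_apply, Matrix.mul_apply]
    rw [Finset.sum_eq_single a]
    · rw [Smat_pow_apply, Omat_pow_apply, if_pos rfl]
      rw [ZMod.natCast_val, ZMod.cast_id]
      have hcond : (b = a + j) ↔ (j = b - a) := by constructor <;> intro h <;> simp [h]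
      by_cases h : j = b - a
      · rw [if_pos (hcond.mpr h), if_pos h, one_mul, ← pow_mul]
        exact conj_omega_pow d _
      · rw [if_neg (fun hh => h (hcond.mp hh)), if_neg h, zero_mul]
        exact star_zero _
    · intro l _ hl
      rw [Omat_pow_apply, if_neg hl, mul_zero]
    · intro h
      exact absurd (Finset.mem_univ _) h
  rw [Trec, Matrix.smul_apply, Matrix.sum_apply]
  simp only [Matrix.sum_apply, Matrix.smul_apply, hform, smul_eq_mul, mul_ite, mul_zero]
  rw [Finset.sum_comm]
  simp only [Finset.sum_ite_eq' Finset.univ (b - a), Finset.mem_univ, if_true]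
  congr 1
  rw [symb]
  apply Finset.sum_congr rfl
  intro r _
  congr 1
  · rw [neg_sub]
  · rw [← pow_add, omega_val_add, sub_add_cancel]
    rw [_root_.zpow_neg, zpow_natCast]
end Aux

theorem stmt14 (d : ℕ) [NeZero d] (hd : 2 ≤ d) (c : Matrix (ZMod d) (ZMod d) ℂ) (m : ZMod d) :
    (∃ v : ZMod d → ℂ, Trec d c = Matrix.vecMulVec v (star v) ∧ v m ≠ 0) ↔
    ((symb d c 0 (omegaRoot d ^ m.val)).im = 0 ∧
      0 < (symb d c 0 (omegaRoot d ^ m.val)).re ∧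
      ∀ j k : ZMod d,
        symb d c (j - k) (omegaRoot d ^ k.val)
          = symb d c (j - m) (omegaRoot d ^ m.val)
              * (starRingEnd ℂ) (symb d c (k - m) (omegaRoot d ^ m.val))
              / symb d c 0 (omegaRoot d ^ m.val)) := by
  have hd0 : (d:ℂ) ≠ 0 := Nat.cast_ne_zero.mpr (NeZero.ne d)
  have hdR : (0:ℝ) < d := Nat.cast_pos.mpr (Nat.pos_of_ne_zero (NeZero.ne d))
  have key : ∀ j k : ZMod d,
      symb d c (j - k) (omegaRoot d ^ k.val) = d * Trec d c j k := by
    intro j k; rw [Aux.Trec_apply]; field_simp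
  have key0 : symb d c 0 (omegaRoot d ^ m.val) = d * Trec d c m m := by
    rw [show (0:ZMod d) = m - m from (sub_self m).symm, key]
  constructor
  · rintro ⟨v, hA, hvm⟩
    have hAv : ∀ j k, Trec d c j k = v j * (starRingEnd ℂ) (v k) := by
      intro j k; rw [hA, Matrix.vecMulVec_apply]; rfl
    have hcvm : (starRingEnd ℂ) (v m) ≠ 0 := by
      simpa using hvm
    refine ⟨?_, ?_, ?_⟩
    · rw [key0, hAv, Complex.mul_conj, ← Complex.ofReal_natCast, ← Complex.ofReal_mul]
      simp
    · rw [key0, hAv, Complex.mul_conj, ← Complex.ofReal_natCast, ← Complex.ofReal_mul]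
      rw [Complex.ofReal_re]
      exact mul_pos hdR (Complex.normSq_pos.mpr hvm)
    · intro j k
      rw [key, key, key, key0, hAv, hAv, hAv, hAv]
      field_simp
      simp only [_root_.map_mul, Complex.conj_conj, map_natCast]
      ring
  · rintro ⟨h1, h2, h3⟩
    set s0 := symb d c 0 (omegaRoot d ^ m.val) with hs0def
    have hs0ne : s0 ≠ 0 := fun h => by simp [h] at h2
    have hs0re : ((s0.re : ℝ) : ℂ) = s0 := Complex.ext (by simp) (by simp [h1])
    have hpos : (0:ℝ) < d * s0.re := mul_pos hdR h2
    set t := Real.sqrt (d * s0.re) with ht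
    have htpos : 0 < t := Real.sqrt_pos.mpr hpos
    have htne : (t:ℂ) ≠ 0 := by
      exact_mod_cast ne_of_gt htpos
    have hts : (t:ℂ) * (t:ℂ) = (d:ℂ) * s0 := by
      rw [← Complex.ofReal_mul, Real.mul_self_sqrt hpos.le, Complex.ofReal_mul, hs0re]
      norm_num
    refine ⟨fun j => symb d c (j - m) (omegaRoot d ^ m.val) / (t:ℂ), ?_, ?_⟩
    · ext j k
      rw [Matrix.vecMulVec_apply, Aux.Trec_apply, h3 j k]
      simp only [Pi.star_apply, RCLike.star_def, map_div₀, Complex.conj_ofReal]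
      conv_rhs => rw [div_mul_div_comm, hts]
      field_simp
    · show symb d c (m - m) (omegaRoot d ^ m.val) / (t:ℂ) ≠ 0
      rw [sub_self]
      exact div_ne_zero hs0ne htne
end

section
/- Let c ∈ ℂ^{ℤ_d×ℤ_d}. Then Tc = vv* for some v ∈ ℂ^d with v_0 ≠ 0 if and only if p_0(1) is real and positive and p_{j−k}(ω^k) = p_j(1)·conj(p_k(1)) / p_0(1) for all j,k ∈ ℤ_d (subscripts mod d). -/
open Matrix Complex

lemma omega_ne_zero (d : ℕ) : omegaRoot d ≠ 0 := Complex.exp_ne_zero _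

lemma omega_pow_d (d : ℕ) [NeZero d] : omegaRoot d ^ d = 1 := by
  rw [omegaRoot, ← Complex.exp_nat_mul]
  rw [mul_div_assoc', mul_comm, mul_div_assoc, div_self (by exact_mod_cast (NeZero.ne d)), mul_one]
  exact Complex.exp_two_pi_mul_I

lemma omega_pow_mod (d : ℕ) [NeZero d] (a : ℕ) :
    omegaRoot d ^ a = omegaRoot d ^ (a % d) := by
  conv_lhs => rw [← Nat.mod_add_div a d]
  rw [pow_add, pow_mul, omega_pow_d, one_pow, mul_one]

lemma conj_omega_pow (d : ℕ) (a : ℕ) :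
    (starRingEnd ℂ) (omegaRoot d ^ a) = (omegaRoot d ^ a)⁻¹ := by
  rw [map_pow, ← inv_pow]
  congr 1
  rw [omegaRoot, ← Complex.exp_conj, ← Complex.exp_neg]
  congr 1
  simp [map_div₀, map_ofNat]
  ring

lemma Smat_pow_apply (d : ℕ) [NeZero d] (p : ℕ) (m n : ZMod d) :
    (Smat d ^ p) m n = if m = n + (p : ZMod d) then 1 else 0 := by
  induction p generalizing m n with
  | zero => simp [Matrix.one_apply]
  | succ p ih =>
    rw [pow_succ, Matrix.mul_apply]
    have hS : ∀ x : ZMod d, Smat d x n = if x = n + 1 then 1 else 0 := fun x => rfl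
    simp only [hS, mul_ite, mul_one, mul_zero]
    rw [Finset.sum_ite_eq' Finset.univ (n + 1) (fun x => (Smat d ^ p) m x)]
    simp only [Finset.mem_univ, if_true, ih]
    congr 1
    rw [eq_iff_iff]
    constructor <;> intro h <;> [skip; skip] <;>
      · rw [h]; push_cast; ring

lemma Omat_diag (d : ℕ) [NeZero d] :
    Omat d = Matrix.diagonal (fun j : ZMod d => omegaRoot d ^ j.val) := by
  ext j k
  by_cases h : j = k <;> simp [Omat, Matrix.diagonal, h]

lemma Omat_pow_apply (d : ℕ) [NeZero d] (q : ℕ) (m n : ZMod d) :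
    (Omat d ^ q) m n = if m = n then omegaRoot d ^ (m.val * q) else 0 := by
  rw [Omat_diag, Matrix.diagonal_pow]
  by_cases h : m = n <;> simp [Matrix.diagonal, h, pow_mul]

lemma SO_prod_apply (d : ℕ) [NeZero d] (p q : ℕ) (x y : ZMod d) :
    (Smat d ^ p * Omat d ^ q) x y
      = if x = y + (p : ZMod d) then omegaRoot d ^ (y.val * q) else 0 := by
  rw [Omat_diag, Matrix.diagonal_pow, Matrix.mul_diagonal, Smat_pow_apply]
  by_cases h : x = y + (p : ZMod d) <;> simp [h, pow_mul]

lemma Trec_apply_s15 (d : ℕ) [NeZero d] (c : Matrix (ZMod d) (ZMod d) ℂ) (m n : ZMod d) :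
    Trec d c m n = (1 / (d : ℂ)) * symb d c (m - n) (omegaRoot d ^ n.val) := by
  have hcond : ∀ j : ZMod d, (n = m + (j.val : ZMod d)) = (j = n - m) := by
    intro j
    rw [eq_iff_iff, ZMod.natCast_val, ZMod.cast_id]
    constructor <;> intro h <;> rw [h] <;> ring
  have hpow : omegaRoot d ^ (m - n).val * omegaRoot d ^ n.val = omegaRoot d ^ m.val := by
    rw [← pow_add, omega_pow_mod, ← ZMod.val_add, sub_add_cancel]
  rw [Trec, Matrix.smul_apply, Matrix.sum_apply]
  simp only [Matrix.sum_apply, Matrix.smul_apply, Matrix.conjTranspose_apply, SO_prod_apply,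
    smul_eq_mul]
  have hstar : ∀ z : ℂ, star z = (starRingEnd ℂ) z := fun _ => rfl
  simp only [hstar, hcond, apply_ite (starRingEnd ℂ), map_zero, mul_ite, mul_zero]
  rw [Finset.sum_comm]
  simp only [Finset.sum_ite_eq' Finset.univ, Finset.mem_univ, if_true]
  rw [symb, Finset.mul_sum, Finset.mul_sum]
  apply Finset.sum_congr rfl
  intro r _
  rw [neg_sub, hpow, _root_.zpow_neg, zpow_natCast, ← pow_mul, ← conj_omega_pow]

theorem stmt15 (d : ℕ) [NeZero d] (hd : 2 ≤ d) (c : Matrix (ZMod d) (ZMod d) ℂ) :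
    (∃ v : ZMod d → ℂ, Trec d c = Matrix.vecMulVec v (star v) ∧ v 0 ≠ 0) ↔
    ((symb d c 0 1).im = 0 ∧ 0 < (symb d c 0 1).re ∧
      ∀ j k : ZMod d,
        symb d c (j - k) (omegaRoot d ^ k.val)
          = symb d c j 1 * (starRingEnd ℂ) (symb d c k 1) / symb d c 0 1) := by
  have hdR : (0:ℝ) < d := by positivity
  have hd0 : (d : ℂ) ≠ 0 := by exact_mod_cast (NeZero.ne d)
  have hsymb : ∀ m n : ZMod d,
      symb d c (m - n) (omegaRoot d ^ n.val) = d * Trec d c m n := by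
    intro m n
    rw [Trec_apply_s15]
    field_simp
  have hsymb1 : ∀ m : ZMod d, symb d c m 1 = d * Trec d c m 0 := by
    intro m
    have := hsymb m 0
    rwa [sub_zero, ZMod.val_zero, pow_zero] at this
  constructor
  · rintro ⟨v, hT, hv0⟩
    have key : ∀ m n : ZMod d,
        symb d c (m - n) (omegaRoot d ^ n.val) = d * (v m * (starRingEnd ℂ) (v n)) := by
      intro m n
      rw [hsymb, hT, Matrix.vecMulVec_apply]
      rfl
    have key1 : ∀ m : ZMod d, symb d c m 1 = d * (v m * (starRingEnd ℂ) (v 0)) := by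
      intro m
      have := key m 0
      rwa [sub_zero, ZMod.val_zero, pow_zero] at this
    have h00 : symb d c 0 1 = ((d * Complex.normSq (v 0) : ℝ) : ℂ) := by
      rw [key1 0, Complex.mul_conj]
      push_cast
      ring
    have hns : 0 < Complex.normSq (v 0) := Complex.normSq_pos.mpr hv0
    refine ⟨by rw [h00]; simp, by rw [h00]; simpa using by positivity, ?_⟩
    intro j k
    rw [key, key1 j, key1 k, key1 0]
    have hc0 : (starRingEnd ℂ) (v 0) ≠ 0 := star_ne_zero.mpr hv0
    field_simp
    simp only [map_mul, Complex.conj_conj, map_natCast]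
    ring
  · rintro ⟨him, hre, hcond⟩
    set a := symb d c 0 1 with ha_def
    have ha : ((a.re : ℝ) : ℂ) = a := by
      apply Complex.ext <;> simp [him]
    have hane : a ≠ 0 := by
      intro h
      rw [h] at hre
      simp at hre
    set s := Real.sqrt (d * a.re) with hs_def
    have hspos : 0 < s := Real.sqrt_pos.mpr (by positivity)
    have hs2 : (s : ℂ) * (s : ℂ) = (d : ℂ) * a := by
      have h : s * s = d * a.re := Real.mul_self_sqrt (by positivity)
      rw [← Complex.ofReal_mul, h, Complex.ofReal_mul, ha, Complex.ofReal_natCast]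
    have hsC : (s : ℂ) ≠ 0 := by exact_mod_cast hspos.ne'
    refine ⟨fun m => symb d c m 1 / (s : ℂ), ?_, div_ne_zero hane hsC⟩
    ext m n
    have h1 : Trec d c m n = (1 / (d : ℂ)) * (symb d c m 1 * (starRingEnd ℂ) (symb d c n 1) / a) := by
      rw [Trec_apply_s15, hcond m n]
    rw [h1, Matrix.vecMulVec_apply]
    have hstar : ∀ z : ℂ, star z = (starRingEnd ℂ) z := fun _ => rfl
    simp only [Pi.star_apply, hstar, map_div₀, Complex.conj_ofReal]
    rw [div_mul_div_comm, div_mul_div_comm, ← hs2]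
    ring
end

section
/- For every t, φ ∈ ℝ, the point w = e^{it} + e^{iφ} + e^{−i(t+φ)} (a sum z₁+z₂+z₃ of three unimodular complex numbers with z₁z₂z₃ = 1) lies on the line segment joining A = 2e^{−iφ/2} + e^{iφ} and B = −2e^{−iφ/2} + e^{iφ}: precisely, w = λA + (1−λ)B with λ = (cos(t + φ/2) + 1)/2 ∈ [0,1]. In particular, since A and B lie on the curve θ ↦ 2e^{iθ} + e^{−2iθ} (a 3-cusped hypocycloid, taking θ = −φ/2 and θ = π − φ/2), every such sum z₁+z₂+z₃ with |z₁|=|z₂|=|z₃|=1 and z₁z₂z₃=1 lies on a chord of this hypocycloid. -/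
open Complex Real

theorem stmt19 (t φ : ℝ) :
    ∃ lam : ℝ, lam = (Real.cos (t + φ / 2) + 1) / 2 ∧ 0 ≤ lam ∧ lam ≤ 1 ∧
    Complex.exp (Complex.I * t) + Complex.exp (Complex.I * φ)
        + Complex.exp (-Complex.I * (t + φ))
      = (lam : ℂ) * (2 * Complex.exp (-Complex.I * φ / 2) + Complex.exp (Complex.I * φ))
        + ((1 : ℂ) - lam)
            * (-2 * Complex.exp (-Complex.I * φ / 2) + Complex.exp (Complex.I * φ)) ∧
    -- A is the hypocycloid point θ ↦ 2e^{iθ} + e^{-2iθ} at θ = -φ/2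
    (2 * Complex.exp (-Complex.I * φ / 2) + Complex.exp (Complex.I * φ)
      = 2 * Complex.exp (Complex.I * (-(φ / 2) : ℝ))
        + Complex.exp (-2 * Complex.I * (-(φ / 2) : ℝ))) ∧
    -- B is the hypocycloid point θ ↦ 2e^{iθ} + e^{-2iθ} at θ = π - φ/2
    (-2 * Complex.exp (-Complex.I * φ / 2) + Complex.exp (Complex.I * φ)
      = 2 * Complex.exp (Complex.I * ((Real.pi - φ / 2) : ℝ))
        + Complex.exp (-2 * Complex.I * ((Real.pi - φ / 2) : ℝ))) := by
  refine ⟨(Real.cos (t + φ / 2) + 1) / 2, rfl, ?_, ?_, ?_, ?_, ?_⟩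
  · nlinarith [Real.neg_one_le_cos (t + φ / 2)]
  · nlinarith [Real.cos_le_one (t + φ / 2)]
  · have h1 : Complex.exp (Complex.I * t)
        = Complex.exp (Complex.I * ((t : ℂ) + φ / 2)) * Complex.exp (-Complex.I * φ / 2) := by
      rw [← Complex.exp_add]; ring_nf
    have h2 : Complex.exp (-Complex.I * (t + φ))
        = Complex.exp (-(Complex.I * ((t : ℂ) + φ / 2))) * Complex.exp (-Complex.I * φ / 2) := by
      rw [← Complex.exp_add]; ring_nf
    have hc : Complex.cos ((t : ℂ) + φ / 2)
        = (Complex.exp (Complex.I * ((t : ℂ) + φ / 2))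
            + Complex.exp (-(Complex.I * ((t : ℂ) + φ / 2)))) / 2 := by
      rw [Complex.cos]
      ring_nf
    rw [h1, h2]
    push_cast
    rw [hc]
    ring
  · have : (-Complex.I * φ / 2) = Complex.I * ((-(φ / 2) : ℝ) : ℂ) := by push_cast; ring
    rw [this]
    congr 1
    congr 1
    push_cast; ring
  · have h1 : Complex.exp (Complex.I * ((Real.pi - φ / 2 : ℝ) : ℂ))
        = Complex.exp (Complex.I * Real.pi) * Complex.exp (-Complex.I * φ / 2) := by
      rw [← Complex.exp_add]; push_cast; ring_nf
    have h2 : Complex.exp (-2 * Complex.I * ((Real.pi - φ / 2 : ℝ) : ℂ))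
        = Complex.exp (-(2 * Real.pi * Complex.I)) * Complex.exp (Complex.I * φ) := by
      rw [← Complex.exp_add]; push_cast; ring_nf
    have h3 : Complex.exp (Complex.I * (Real.pi : ℂ)) = -1 := by
      rw [mul_comm]; exact Complex.exp_pi_mul_I
    have h4 : Complex.exp (-(2 * (Real.pi : ℂ) * Complex.I)) = 1 := by
      rw [Complex.exp_neg, Complex.exp_two_pi_mul_I]; norm_num
    rw [h1, h2, h3, h4]
    ring
end
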